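/- Let G be a strongly connected multidigraph with incidence matrix C. Then the vectors ν_σ, as σ ranges over the elementary cycles of G, span the kernel of C. -/

import Mathlib

/-- A multidigraph: a set of nodes `V`, a set of edges `E`, and source/target maps. -/
structure Multidigraph (V E : Type*) where
  src : E → V
  tgt : E → V

namespace Multidigraph

variable {V E : Type*}

/-- One-step edge relation using only the edges in `τ`. -/
def Rel (G : Multidigraph V E) (τ : Set E) (a b : V) : Prop :=
  ∃ e ∈ τ, G.src e = a ∧ G.tgt e = b

/-- Undirected (symmetrized) one-step relation. -/
def URel (G : Multidigraph V E) (a b : V) : Prop :=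
  G.Rel Set.univ a b ∨ G.Rel Set.univ b a

/-- Node set of the (weakly) connected component containing `v`. -/
def component (G : Multidigraph V E) (v : V) : Set V :=
  {w | Relation.ReflTransGen G.URel v w}

/-- `τ` is a spanning tree of the subgraph of `G` induced on the node set `W`,
rooted at `r`: all edges stay inside `W`, every non-root node of `W` has exactly
one outgoing edge in `τ`, the root has none, and every node of `W` reaches `r`
through `τ`. -/
def IsSpanningTreeOn (G : Multidigraph V E) (W : Set V) (τ : Finset E) (r : V) : Prop :=
  (∀ e ∈ τ, G.src e ∈ W ∧ G.tgt e ∈ W) ∧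
  (∀ v ∈ W, v ≠ r → ∃! e, e ∈ τ ∧ G.src e = v) ∧
  (∀ e ∈ τ, G.src e ≠ r) ∧
  (∀ v ∈ W, Relation.ReflTransGen (G.Rel (τ : Set E)) v r)

/-- Spanning tree of `G` rooted at `r`. -/
def IsSpanningTree (G : Multidigraph V E) (τ : Finset E) (r : V) : Prop :=
  G.IsSpanningTreeOn Set.univ τ r

/-- A cycle: a nonempty closed directed path with pairwise distinct nodes. -/
def IsCycle (G : Multidigraph V E) (l : List E) : Prop :=
  l ≠ [] ∧ (l.map G.src).Nodup ∧
  l.Chain' (fun a b => G.tgt a = G.src b) ∧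
  ∀ h : l ≠ [], G.tgt (l.getLast h) = G.src (l.head h)

def StronglyConnected (G : Multidigraph V E) : Prop :=
  ∀ a b : V, Relation.ReflTransGen (G.Rel Set.univ) a b

def Connected (G : Multidigraph V E) : Prop :=
  ∀ a b : V, Relation.ReflTransGen G.URel a b

/-- Incidence matrix of a multidigraph. -/
def incidence [DecidableEq V] (G : Multidigraph V E) : Matrix V E ℝ := fun v e =>
  if G.tgt e = v ∧ G.src e ≠ v then 1
  else if G.src e = v ∧ G.tgt e ≠ v then (-1 : ℝ) else 0

end Multidigraph


open scoped Classical

namespace Multidigraph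

variable {V E : Type} [Fintype V] [Fintype E] [DecidableEq V] (G : Multidigraph V E)

/-- a closed walk: nonempty, chain, closing -/
def IsClosedWalk (l : List E) : Prop :=
  l ≠ [] ∧ l.Chain' (fun a b => G.tgt a = G.src b) ∧
  ∀ h : l ≠ [], G.tgt (l.getLast h) = G.src (l.head h)

lemma map_tgt_eq (l : List E) (hc : l.Chain' (fun a b => G.tgt a = G.src b)) (h : l ≠ []) :
    l.map G.tgt = l.tail.map G.src ++ [G.tgt (l.getLast h)] := by
  induction l with
  | nil => simp at h
  | cons a t ih =>
    cases t with
    | nil => simp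
    | cons b s =>
      have hc' : (b :: s).Chain' (fun a b => G.tgt a = G.src b) := hc.tail
      have hab : G.tgt a = G.src b := (List.isChain_cons_cons.mp hc).1
      have := ih hc' (by simp)
      simp only [List.map_cons, List.tail_cons] at this ⊢
      rw [List.getLast_cons (by simp)]
      rw [this, hab]
      simp

lemma count_src_eq_count_tgt [DecidableEq E] (l : List E) (hl : G.IsClosedWalk l) (v : V) :
    (l.map G.src).count v = (l.map G.tgt).count v := by
  obtain ⟨h, hc, hcl⟩ := hl
  rw [map_tgt_eq G l hc h, hcl h]
  obtain ⟨a, t, rfl⟩ := List.exists_cons_of_ne_nil h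
  simp [List.count_append, List.count_cons]
  try omega

end Multidigraph

namespace Multidigraph

variable {V E : Type} [Fintype V] [Fintype E] [DecidableEq V] (G : Multidigraph V E)

lemma incidence_eq (v : V) (e : E) :
    G.incidence v e = (if G.tgt e = v then (1:ℝ) else 0) - (if G.src e = v then 1 else 0) := by
  unfold incidence
  by_cases h1 : G.tgt e = v <;> by_cases h2 : G.src e = v <;> simp [h1, h2]

lemma sum_map_ite {α : Type} (p : α → Prop) [DecidablePred p] (l : List α) :
    (l.map fun a => if p a then (1:ℝ) else 0).sum = ((l.countP fun a => decide (p a)) : ℝ) := by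
  induction l with
  | nil => simp
  | cons a t ih =>
    simp only [List.map_cons, List.sum_cons, List.countP_cons, ih]
    by_cases h : p a <;> simp [h] <;> ring

lemma countP_eq_count_map {α β : Type} [DecidableEq β] (f : α → β) (l : List α) (v : β) :
    (l.countP fun a => decide (f a = v)) = (l.map f).count v := by
  rw [List.count, List.countP_map]
  apply List.countP_congr
  intro a _
  simp

lemma sum_map_incidence (v : V) (l : List E) :
    (l.map (G.incidence v)).sum
      = (l.map fun e => if G.tgt e = v then (1:ℝ) else 0).sum
        - (l.map fun e => if G.src e = v then (1:ℝ) else 0).sum := by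
  induction l with
  | nil => simp
  | cons a t ih => simp only [List.map_cons, List.sum_cons, ih, incidence_eq]; ring

lemma closedWalk_count_mem_ker [DecidableEq E] (l : List E) (hl : G.IsClosedWalk l) :
    (fun e => ((l.count e : ℕ) : ℝ)) ∈ LinearMap.ker (Matrix.mulVecLin G.incidence) := by
  rw [LinearMap.mem_ker, Matrix.mulVecLin_apply]
  funext v
  show (∑ e : E, G.incidence v e * ((l.count e : ℕ) : ℝ)) = 0
  have h1 : (∑ e : E, G.incidence v e * ((l.count e : ℕ) : ℝ))
      = ∑ e ∈ l.toFinset, (l.count e) • G.incidence v e := by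
    rw [← Finset.sum_subset (Finset.subset_univ l.toFinset)]
    · apply Finset.sum_congr rfl
      intro e _
      rw [nsmul_eq_mul, mul_comm]
    · intro e _ he
      rw [List.mem_toFinset] at he
      simp [List.count_eq_zero.mpr he]
  rw [h1, ← Finset.sum_list_map_count]
  rw [sum_map_incidence, sum_map_ite, sum_map_ite, countP_eq_count_map, countP_eq_count_map,
    ← count_src_eq_count_tgt G l hl v, sub_self]

end Multidigraph

namespace Multidigraph

variable {V E : Type} [Fintype V] [Fintype E] [DecidableEq V] (G : Multidigraph V E)

lemma flow_split (w : E → ℝ) (hker : ∀ v, ∑ e, G.incidence v e * w e = 0) (v : V) :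
    (∑ e, if G.tgt e = v ∧ G.src e ≠ v then w e else 0)
      = ∑ e, if G.src e = v ∧ G.tgt e ≠ v then w e else 0 := by
  have h := hker v
  have key : ∑ e, ((if G.tgt e = v ∧ G.src e ≠ v then w e else 0)
      - (if G.src e = v ∧ G.tgt e ≠ v then w e else 0)) = ∑ e, G.incidence v e * w e := by
    apply Finset.sum_congr rfl
    intro e _
    unfold incidence
    split_ifs with h1 h2
    · exact absurd h2.1 h1.2
    · ring
    · ring
    · ring
  rw [← sub_eq_zero, ← Finset.sum_sub_distrib, key, h]

lemma claimA (w : E → ℝ) (hw : ∀ e, 0 ≤ w e)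
    (hker : ∀ v, ∑ e, G.incidence v e * w e = 0) (v : V)
    (h : ∃ e, 0 < w e ∧ G.tgt e = v ∧ G.src e ≠ v) :
    ∃ e, 0 < w e ∧ G.src e = v ∧ G.tgt e ≠ v := by
  obtain ⟨e, hpos, ht, hs⟩ := h
  have h1 : (0:ℝ) < ∑ e, if G.tgt e = v ∧ G.src e ≠ v then w e else 0 := by
    calc (0:ℝ) < w e := hpos
    _ = (if G.tgt e = v ∧ G.src e ≠ v then w e else 0) := by simp [ht, hs]
    _ ≤ _ := by
        apply Finset.single_le_sum (fun f _ => ?_) (Finset.mem_univ e)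
        split_ifs <;> [exact hw f; exact le_refl 0]
  rw [flow_split G w hker v] at h1
  by_contra hc
  push_neg at hc
  have : (∑ e, if G.src e = v ∧ G.tgt e ≠ v then w e else 0) ≤ 0 := by
    apply Finset.sum_nonpos
    intro f _
    split_ifs with hf
    · rcases le_or_gt (w f) 0 with h | h
      · exact h
      · exact absurd hf.2 (by simpa using hc f h hf.1)
    · exact le_refl 0
  linarith

lemma exists_cycle_pos (w : E → ℝ) (hw : ∀ e, 0 ≤ w e)
    (hker : ∀ v, ∑ e, G.incidence v e * w e = 0)
    (e0 : E) (he0 : 0 < w e0) :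
    ∃ l, G.IsCycle l ∧ ∀ e ∈ l, 0 < w e := by
  by_cases hself : G.src e0 = G.tgt e0
  · exact ⟨[e0], ⟨by simp, by simp, List.isChain_singleton e0, fun h => by simp [hself]⟩,
      by simpa using he0⟩
  -- general case
  set A : Set V := {v | ∃ e, 0 < w e ∧ G.src e = v ∧ G.tgt e ≠ v} with hA_def
  have hA : ∀ v : V, ∃ e, v ∈ A → (0 < w e ∧ G.src e = v ∧ G.tgt e ≠ v) := by
    intro v
    by_cases hv : v ∈ A
    · obtain ⟨e, he⟩ := hv
      exact ⟨e, fun _ => he⟩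
    · exact ⟨e0, fun h => absurd h hv⟩
  choose nxt hnxt using hA
  have hpos : ∀ v ∈ A, 0 < w (nxt v) := fun v hv => (hnxt v hv).1
  have hsrc : ∀ v ∈ A, G.src (nxt v) = v := fun v hv => (hnxt v hv).2.1
  have htgt : ∀ v ∈ A, G.tgt (nxt v) ≠ v := fun v hv => (hnxt v hv).2.2
  set f : V → V := fun v => G.tgt (nxt v) with hf_def
  have hclosed : ∀ v ∈ A, f v ∈ A := by
    intro v hv
    refine claimA G w hw hker (f v) ⟨nxt v, hpos v hv, rfl, ?_⟩
    rw [hsrc v hv]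
    exact fun h => htgt v hv h.symm
  set v0 : V := G.src e0 with hv0_def
  have hv0 : v0 ∈ A := ⟨e0, he0, rfl, fun h => hself h.symm⟩
  have hiter : ∀ n, f^[n] v0 ∈ A := by
    intro n
    induction n with
    | zero => exact hv0
    | succ n ih => rw [Function.iterate_succ_apply']; exact hclosed _ ih
  obtain ⟨i, j, hne, hij⟩ := Fintype.exists_ne_map_eq_of_card_lt
    (fun i : Fin (Fintype.card V + 1) => f^[(i : ℕ)] v0) (by simp)
  -- wlog i < j
  have key : ∃ q, 0 < q ∧ ∃ i : ℕ, f^[q] (f^[i] v0) = f^[i] v0 := by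
    rcases lt_or_gt_of_ne (fun h => hne (Fin.ext h) : (i:ℕ) ≠ (j:ℕ)) with h | h
    · refine ⟨j - i, by omega, i, ?_⟩
      rw [← Function.iterate_add_apply, show (j:ℕ) - i + i = j by omega]
      exact hij.symm
    · refine ⟨i - j, by omega, j, ?_⟩
      rw [← Function.iterate_add_apply, show (i:ℕ) - j + j = i by omega]
      exact hij
  obtain ⟨q, hq, i0, hqi⟩ := key
  set u : V := f^[i0] v0 with hu_def
  have hu_iter : ∀ k, f^[k] u ∈ A := by
    intro k
    rw [hu_def, ← Function.iterate_add_apply]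
    exact hiter _
  have hex : ∃ m, 0 < m ∧ f^[m] u = u := ⟨q, hq, hqi⟩
  set p := Nat.find hex with hp_def
  obtain ⟨hp_pos, hp_eq⟩ := Nat.find_spec hex
  have hmin : ∀ m, m < p → ¬(0 < m ∧ f^[m] u = u) := fun m hm => Nat.find_min hex hm
  have hinj : ∀ a, a < p → ∀ b, b < p → f^[a] u = f^[b] u → a = b := by
    have key2 : ∀ a b, a < b → b < p → f^[a] u = f^[b] u → False := by
      intro a b hab hbp heq
      apply hmin (p - b + a) (by omega)
      refine ⟨by omega, ?_⟩
      rw [Function.iterate_add_apply, heq, ← Function.iterate_add_apply,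
        show p - b + b = p by omega]
      exact hp_eq
    intro a ha b hb heq
    rcases lt_trichotomy a b with h | h | h
    · exact absurd heq (fun heq => key2 a b h hb heq)
    · exact h
    · exact absurd heq.symm (fun heq => key2 b a h ha heq)
  refine ⟨(List.range p).map (fun k => nxt (f^[k] u)), ⟨?_, ?_, ?_, ?_⟩, ?_⟩
  · intro h
    apply_fun List.length at h
    simp at h
    omega
  · have : ((List.range p).map (fun k => nxt (f^[k] u))).map G.src
        = (List.range p).map (fun k => f^[k] u) := by
      rw [List.map_map]
      apply List.map_congr_left
      intro k _
      exact hsrc _ (hu_iter k)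
    rw [this]
    exact List.Nodup.map_on
      (fun a ha b hb => hinj a (List.mem_range.mp ha) b (List.mem_range.mp hb))
      (List.nodup_range (n := p))
  · show List.IsChain _ _
    rw [List.isChain_iff_getElem]
    intro k hk
    simp only [List.get_eq_getElem, List.getElem_map, List.getElem_range]
    simp only [List.length_map, List.length_range] at hk
    show G.tgt (nxt (f^[k] u)) = G.src (nxt (f^[k+1] u))
    rw [hsrc _ (hu_iter (k+1)), Function.iterate_succ_apply']
  · intro h
    have hlast : (((List.range p).map (fun k => nxt (f^[k] u)))).getLast h
        = nxt (f^[p-1] u) := by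
      rw [List.getLast_eq_getElem]
      simp
    have hhead : (((List.range p).map (fun k => nxt (f^[k] u)))).head h
        = nxt (f^[0] u) := by
      rw [List.head_eq_getElem]
      simp
    rw [hlast, hhead, hsrc _ (hu_iter 0)]
    show f (f^[p-1] u) = f^[0] u
    have hstep : f (f^[p-1] u) = f^[p-1+1] u := (Function.iterate_succ_apply' f (p-1) u).symm
    rw [hstep, show p-1+1 = p by omega, hp_eq]
    simp
  · intro e he
    simp only [List.mem_map, List.mem_range] at he
    obtain ⟨k, _, rfl⟩ := he
    exact hpos _ (hu_iter k)

end Multidigraph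

namespace Multidigraph

variable {V E : Type} [Fintype V] [Fintype E] [DecidableEq V] (G : Multidigraph V E)

lemma mem_ker_iff (w : E → ℝ) :
    w ∈ LinearMap.ker (Matrix.mulVecLin G.incidence)
      ↔ ∀ v, ∑ e, G.incidence v e * w e = 0 := by
  rw [LinearMap.mem_ker, Matrix.mulVecLin_apply, funext_iff]
  apply forall_congr'
  intro v
  simp [Matrix.mulVec, dotProduct]

lemma cycle_indicator_mem_ker (l : List E) (hl : G.IsCycle l) :
    (fun e => if e ∈ l then (1:ℝ) else 0)
      ∈ LinearMap.ker (Matrix.mulVecLin G.incidence) := by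
  obtain ⟨h1, h2, h3, h4⟩ := hl
  have hnd : l.Nodup := h2.of_map _
  have key := closedWalk_count_mem_ker G l ⟨h1, h3, h4⟩
  convert key using 1
  funext e
  by_cases he : e ∈ l
  · simp [he, List.count_eq_one_of_mem hnd he]
  · simp [he, List.count_eq_zero.mpr he]

/-- the set of elementary cycle indicator vectors -/
def cycleSet : Set (E → ℝ) :=
  {w : E → ℝ | ∃ l : List E, G.IsCycle l ∧ w = fun e => if e ∈ l then 1 else 0}

lemma decomp : ∀ n (w : E → ℝ), (Finset.univ.filter fun e => w e ≠ 0).card = n →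
    (∀ e, 0 ≤ w e) → (∀ v, ∑ e, G.incidence v e * w e = 0) →
    w ∈ Submodule.span ℝ G.cycleSet := by
  intro n
  induction n using Nat.strong_induction_on with
  | _ n ih =>
    intro w hcard hw hker
    by_cases hz : ∀ e, w e = 0
    · have : w = 0 := funext hz
      rw [this]
      exact Submodule.zero_mem _
    · push_neg at hz
      obtain ⟨e0, he0⟩ := hz
      have he0' : 0 < w e0 := lt_of_le_of_ne (hw e0) (Ne.symm he0)
      obtain ⟨l, hl, hlpos⟩ := exists_cycle_pos G w hw hker e0 he0'
      have hlne : l.toFinset.Nonempty := by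
        obtain ⟨a, t, rfl⟩ := List.exists_cons_of_ne_nil hl.1
        exact ⟨a, by simp⟩
      obtain ⟨em, hem, hemmin⟩ := Finset.exists_min_image l.toFinset w hlne
      rw [List.mem_toFinset] at hem
      set t : ℝ := w em with ht_def
      have ht : 0 < t := hlpos em hem
      set ν : E → ℝ := fun e => if e ∈ l then (1:ℝ) else 0 with hν_def
      have hν_ker : ∀ v, ∑ e, G.incidence v e * ν e = 0 :=
        (mem_ker_iff G ν).mp (cycle_indicator_mem_ker G l hl)
      set w' : E → ℝ := fun e => w e - t * ν e with hw'_def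
      have hw'_nonneg : ∀ e, 0 ≤ w' e := by
        intro e
        by_cases he : e ∈ l
        · have := hemmin e (List.mem_toFinset.mpr he)
          simp [hw'_def, hν_def, he]
          linarith
        · simp [hw'_def, hν_def, he]
          exact hw e
      have hw'_ker : ∀ v, ∑ e, G.incidence v e * w' e = 0 := by
        intro v
        have : (∑ e, G.incidence v e * w' e)
            = (∑ e, G.incidence v e * w e) - t * ∑ e, G.incidence v e * ν e := by
          rw [Finset.mul_sum, ← Finset.sum_sub_distrib]
          apply Finset.sum_congr rfl
          intro e _
          simp [hw'_def]
          ring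
        rw [this, hker v, hν_ker v]
        ring
      have hsub : (Finset.univ.filter fun e => w' e ≠ 0)
          ⊂ (Finset.univ.filter fun e => w e ≠ 0) := by
        constructor
        · intro e he
          simp only [Finset.mem_filter, Finset.mem_univ, true_and] at he ⊢
          intro hwe
          apply he
          have hel : e ∉ l := fun hel => absurd hwe (ne_of_gt (hlpos e hel))
          simp [hw'_def, hν_def, hel, hwe]
        · intro hsub'
          have h1 : em ∈ Finset.univ.filter fun e => w e ≠ 0 := by
            simpa using (ht.ne' : w em ≠ 0)
          have h2 : em ∉ Finset.univ.filter fun e => w' e ≠ 0 := by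
            simp [hw'_def, hν_def, hem, ht_def]
          exact h2 (hsub' h1)
      have hlt : (Finset.univ.filter fun e => w' e ≠ 0).card < n := by
        rw [← hcard]
        exact Finset.card_lt_card hsub
      have hw'_span := ih _ hlt w' rfl hw'_nonneg hw'_ker
      have hν_span : ν ∈ Submodule.span ℝ G.cycleSet :=
        Submodule.subset_span ⟨l, hl, rfl⟩
      have : w = w' + t • ν := by
        funext e
        simp [hw'_def]
      rw [this]
      exact Submodule.add_mem _ hw'_span (Submodule.smul_mem _ _ hν_span)

lemma reflTransGen_walk {a b : V} (h : Relation.ReflTransGen (G.Rel Set.univ) a b) :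
    ∃ p : List E, p.Chain' (fun x y => G.tgt x = G.src y) ∧
      (∀ hp : p ≠ [], G.src (p.head hp) = a ∧ G.tgt (p.getLast hp) = b) ∧
      (p = [] → a = b) := by
  induction h with
  | refl => exact ⟨[], List.isChain_nil, fun hp => absurd rfl hp, fun _ => rfl⟩
  | tail hab hbc ih =>
    obtain ⟨p, hc, hne, hnil⟩ := ih
    obtain ⟨f, -, hfs, hft⟩ := hbc
    refine ⟨p ++ [f], ?_, ?_, by simp⟩
    · apply List.IsChain.append hc (List.isChain_singleton f)
      intro x hx y hy
      simp only [List.head?_cons, Option.mem_def, Option.some.injEq] at hy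
      subst hy
      have hpne : p ≠ [] := by
        intro hp
        rw [hp] at hx
        simp at hx
      rw [List.getLast?_eq_getLast hpne] at hx
      simp only [Option.mem_def, Option.some.injEq] at hx
      subst hx
      rw [(hne hpne).2, hfs]
    · intro hp
      constructor
      · cases p with
        | nil =>
          simp only [List.nil_append]
          rw [List.head_cons, hfs, ← hnil rfl]
        | cons x s =>
          rw [List.head_append_of_ne_nil (by simp)]
          exact (hne (by simp)).1
      · rw [List.getLast_append]
        exact hft

lemma exists_closedWalk_mem (hG : G.StronglyConnected) (e : E) :
    ∃ l : List E, G.IsClosedWalk l ∧ e ∈ l := by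
  obtain ⟨p, hc, hne, hnil⟩ := reflTransGen_walk G (hG (G.tgt e) (G.src e))
  cases p with
  | nil =>
    refine ⟨[e], ⟨by simp, List.isChain_singleton e, fun h => ?_⟩, by simp⟩
    simp [← hnil rfl]
  | cons x s =>
    refine ⟨e :: x :: s, ⟨by simp, ?_, fun h => ?_⟩, by simp⟩
    · show List.IsChain _ _
      rw [List.isChain_cons_cons]
      exact ⟨(hne (by simp)).1.symm, hc⟩
    · rw [List.getLast_cons (by simp), List.head_cons]
      exact (hne (by simp)).2
    
lemma ker_le_span (hG : G.StronglyConnected) :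
    LinearMap.ker (Matrix.mulVecLin G.incidence) ≤ Submodule.span ℝ G.cycleSet := by
  intro w hw
  rw [mem_ker_iff] at hw
  have hwalk : ∀ e : E, ∃ l : List E, G.IsClosedWalk l ∧ e ∈ l :=
    exists_closedWalk_mem G hG
  choose L hLw hLm using hwalk
  set x : E → E → ℝ := fun e f => ((L e).count f : ℝ) with hx_def
  have hx_ker : ∀ e, ∀ v, ∑ f, G.incidence v f * x e f = 0 := fun e =>
    (mem_ker_iff G (x e)).mp (closedWalk_count_mem_ker G (L e) (hLw e))
  have hx_nonneg : ∀ e f, 0 ≤ x e f := fun e f => Nat.cast_nonneg _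
  have hxe : ∀ e, (1:ℝ) ≤ x e e := by
    intro e
    have h1 : 0 < (L e).count e := List.count_pos_iff.mpr (hLm e)
    show (1:ℝ) ≤ ((L e).count e : ℝ)
    exact_mod_cast h1
  set c : E → ℝ := fun e => if w e < 0 then (-w e)/(x e e) else 0 with hc_def
  have hc_nonneg : ∀ e, 0 ≤ c e := by
    intro e
    simp only [hc_def]
    split_ifs with h
    · apply div_nonneg (by linarith) (by linarith [hxe e])
    · exact le_refl 0
  set w' : E → ℝ := fun f => w f + ∑ e, c e * x e f with hw'_def
  have hw'_ker : ∀ v, ∑ f, G.incidence v f * w' f = 0 := by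
    intro v
    have expand : (∑ f, G.incidence v f * w' f)
        = (∑ f, G.incidence v f * w f) + ∑ e, c e * ∑ f, G.incidence v f * x e f := by
      simp only [hw'_def, mul_add, Finset.sum_add_distrib]
      congr 1
      have hswap : ∀ f, G.incidence v f * ∑ e, c e * x e f
          = ∑ e, c e * (G.incidence v f * x e f) := by
        intro f
        rw [Finset.mul_sum]
        exact Finset.sum_congr rfl fun e _ => by ring
      rw [Finset.sum_congr rfl fun f _ => hswap f, Finset.sum_comm]
      exact Finset.sum_congr rfl fun e _ => by rw [Finset.mul_sum]
    rw [expand, hw v]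
    simp [hx_ker]
  have hw'_nonneg : ∀ f, 0 ≤ w' f := by
    intro f
    rcases le_or_gt 0 (w f) with h | h
    · have : 0 ≤ ∑ e, c e * x e f :=
        Finset.sum_nonneg fun e _ => mul_nonneg (hc_nonneg e) (hx_nonneg e f)
      simp only [hw'_def]
      linarith
    · have hsingle : c f * x f f ≤ ∑ e, c e * x e f :=
        Finset.single_le_sum
          (fun e _ => mul_nonneg (hc_nonneg e) (hx_nonneg e f)) (Finset.mem_univ f)
      have hx0 : x f f ≠ 0 := by linarith [hxe f]
      have hcf : c f * x f f = -w f := by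
        simp only [hc_def]
        rw [if_pos h]
        exact div_mul_cancel₀ _ hx0
      simp only [hw'_def]
      linarith
  have hw'_span : w' ∈ Submodule.span ℝ G.cycleSet :=
    decomp G _ w' rfl hw'_nonneg hw'_ker
  have hx_span : ∀ e, x e ∈ Submodule.span ℝ G.cycleSet := fun e =>
    decomp G _ (x e) rfl (hx_nonneg e) (hx_ker e)
  have hrepr : w = w' - ∑ e, c e • x e := by
    funext f
    simp [hw'_def, Finset.sum_apply]
  rw [hrepr]
  exact Submodule.sub_mem _ hw'_span
    (Submodule.sum_mem _ fun e _ => Submodule.smul_mem _ _ (hx_span e))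

end Multidigraph


open scoped Classical

/-- For a strongly connected multidigraph, the indicator vectors
`ν_σ` of the elementary cycles span the kernel of the incidence matrix. -/
theorem stmt2 {V E : Type} [Fintype V] [Fintype E] [DecidableEq V]
    (G : Multidigraph V E) (hG : G.StronglyConnected) :
    Submodule.span ℝ
        {w : E → ℝ | ∃ l : List E, G.IsCycle l ∧ w = fun e => if e ∈ l then 1 else 0}
      = LinearMap.ker (Matrix.mulVecLin G.incidence) := by
  have hset : {w : E → ℝ | ∃ l : List E, G.IsCycle l ∧ w = fun e => if e ∈ l then 1 else 0}
      = G.cycleSet := rfl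
  rw [hset]
  apply le_antisymm
  · rw [Submodule.span_le]
    rintro w ⟨l, hl, rfl⟩
    exact G.cycle_indicator_mem_ker l hl
  · exact G.ker_le_span hG
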